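/- Let $K$ be a field and let $V \subseteq \mathrm{SL}_2(K)$ be a finite set of diagonal matrices. Let $g = \begin{pmatrix} a & b \\ c & d \end{pmatrix} \in \mathrm{SL}_2(K)$ with $abcd \ne 0$. Then $|V g V g^{-1} V| \ge \frac{1}{2}(\frac{1}{4}|V| - 5)|V|^2$. -/

import Mathlib

open Finset Pointwise Matrix Polynomial

namespace Stmt8Aux
variable {K : Type*} [Field K]

local notation "SL2" => Matrix.SpecialLinearGroup (Fin 2) K

/-- The triple product map. -/
def tripleMul (g : SL2) : SL2 × SL2 × SL2 → SL2 := fun p => p.1 * (g * p.2.1 * g⁻¹) * p.2.2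

lemma diag_mul_one {v : SL2} (h01 : (v : Matrix (Fin 2) (Fin 2) K) 0 1 = 0)
    (h10 : (v : Matrix (Fin 2) (Fin 2) K) 1 0 = 0) :
    (v : Matrix (Fin 2) (Fin 2) K) 0 0 * (v : Matrix (Fin 2) (Fin 2) K) 1 1 = 1 := by
  have h := v.2
  rw [Matrix.det_fin_two, h01, h10] at h
  linear_combination h

lemma diag_ext {v w : SL2}
    (hv01 : (v : Matrix (Fin 2) (Fin 2) K) 0 1 = 0)
    (hv10 : (v : Matrix (Fin 2) (Fin 2) K) 1 0 = 0)
    (hw01 : (w : Matrix (Fin 2) (Fin 2) K) 0 1 = 0)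
    (hw10 : (w : Matrix (Fin 2) (Fin 2) K) 1 0 = 0)
    (h : (v : Matrix (Fin 2) (Fin 2) K) 0 0 = (w : Matrix (Fin 2) (Fin 2) K) 0 0) : v = w := by
  have hv := diag_mul_one hv01 hv10
  have hw := diag_mul_one hw01 hw10
  have hne : (w : Matrix (Fin 2) (Fin 2) K) 0 0 ≠ 0 := by
    intro h0; rw [h0, zero_mul] at hw; exact one_ne_zero hw.symm
  have h11 : (v : Matrix (Fin 2) (Fin 2) K) 1 1 = (w : Matrix (Fin 2) (Fin 2) K) 1 1 := by
    rw [h] at hv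
    exact mul_left_cancel₀ hne (hv.trans hw.symm)
  ext i j
  fin_cases i <;> fin_cases j <;> simp_all

lemma entries (g u v w : SL2)
    (hu01 : (u : Matrix (Fin 2) (Fin 2) K) 0 1 = 0) (hu10 : (u : Matrix (Fin 2) (Fin 2) K) 1 0 = 0)
    (hv01 : (v : Matrix (Fin 2) (Fin 2) K) 0 1 = 0) (hv10 : (v : Matrix (Fin 2) (Fin 2) K) 1 0 = 0)
    (hw01 : (w : Matrix (Fin 2) (Fin 2) K) 0 1 = 0) (hw10 : (w : Matrix (Fin 2) (Fin 2) K) 1 0 = 0) :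
    ((u * (g * v * g⁻¹) * w : SL2) : Matrix (Fin 2) (Fin 2) K) 0 0 =
      (u : Matrix (Fin 2) (Fin 2) K) 0 0 * (w : Matrix (Fin 2) (Fin 2) K) 0 0 *
        ((g : Matrix (Fin 2) (Fin 2) K) 0 0 * (g : Matrix (Fin 2) (Fin 2) K) 1 1 * (v : Matrix (Fin 2) (Fin 2) K) 0 0
         - (g : Matrix (Fin 2) (Fin 2) K) 0 1 * (g : Matrix (Fin 2) (Fin 2) K) 1 0 * (v : Matrix (Fin 2) (Fin 2) K) 1 1) ∧
    ((u * (g * v * g⁻¹) * w : SL2) : Matrix (Fin 2) (Fin 2) K) 0 1 =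
      (u : Matrix (Fin 2) (Fin 2) K) 0 0 * (w : Matrix (Fin 2) (Fin 2) K) 1 1 *
        ((g : Matrix (Fin 2) (Fin 2) K) 0 0 * (g : Matrix (Fin 2) (Fin 2) K) 0 1 *
          ((v : Matrix (Fin 2) (Fin 2) K) 1 1 - (v : Matrix (Fin 2) (Fin 2) K) 0 0)) ∧
    ((u * (g * v * g⁻¹) * w : SL2) : Matrix (Fin 2) (Fin 2) K) 1 0 =
      (u : Matrix (Fin 2) (Fin 2) K) 1 1 * (w : Matrix (Fin 2) (Fin 2) K) 0 0 *
        ((g : Matrix (Fin 2) (Fin 2) K) 1 0 * (g : Matrix (Fin 2) (Fin 2) K) 1 1 *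
          ((v : Matrix (Fin 2) (Fin 2) K) 0 0 - (v : Matrix (Fin 2) (Fin 2) K) 1 1)) ∧
    ((u * (g * v * g⁻¹) * w : SL2) : Matrix (Fin 2) (Fin 2) K) 1 1 =
      (u : Matrix (Fin 2) (Fin 2) K) 1 1 * (w : Matrix (Fin 2) (Fin 2) K) 1 1 *
        ((g : Matrix (Fin 2) (Fin 2) K) 0 0 * (g : Matrix (Fin 2) (Fin 2) K) 1 1 * (v : Matrix (Fin 2) (Fin 2) K) 1 1
         - (g : Matrix (Fin 2) (Fin 2) K) 0 1 * (g : Matrix (Fin 2) (Fin 2) K) 1 0 * (v : Matrix (Fin 2) (Fin 2) K) 0 0) := by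
  have hginv : ((g⁻¹ : SL2) : Matrix (Fin 2) (Fin 2) K) = Matrix.adjugate (g : Matrix (Fin 2) (Fin 2) K) :=
    Matrix.SpecialLinearGroup.coe_inv g
  refine ⟨?_, ?_, ?_, ?_⟩ <;>
  · simp only [Matrix.SpecialLinearGroup.coe_mul, hginv, Matrix.adjugate_fin_two,
      Matrix.mul_apply, Fin.sum_univ_two, Matrix.cons_val_zero, Matrix.cons_val_one,
      Matrix.head_cons, Matrix.head_fin_const, Matrix.of_apply, Matrix.cons_val',
      Matrix.empty_val', Matrix.cons_val_fin_one, hu01, hu10, hv01, hv10, hw01, hw10]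
    ring

lemma card_le_of_roots [DecidableEq SL2] (W : Finset SL2)
    (hW : ∀ v ∈ W, (v : Matrix (Fin 2) (Fin 2) K) 0 1 = 0 ∧ (v : Matrix (Fin 2) (Fin 2) K) 1 0 = 0)
    (P : Polynomial K) (hP : P ≠ 0) (m : ℕ) (hdeg : P.natDegree ≤ m)
    (hroot : ∀ v ∈ W, P.eval ((v : Matrix (Fin 2) (Fin 2) K) 0 0) = 0) : W.card ≤ m := by
  classical
  have h1 : W.card ≤ P.roots.toFinset.card := by
    apply Finset.card_le_card_of_injOn (fun v : SL2 => (v : Matrix (Fin 2) (Fin 2) K) 0 0)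
    · intro v hv
      rw [Finset.mem_coe, Multiset.mem_toFinset, Polynomial.mem_roots hP]
      exact hroot v hv
    · intro v hv w hw h
      exact diag_ext (hW v hv).1 (hW v hv).2 (hW w hw).1 (hW w hw).2 h
  calc W.card ≤ P.roots.toFinset.card := h1
    _ ≤ Multiset.card P.roots := Multiset.toFinset_card_le _
    _ ≤ P.natDegree := P.card_roots'
    _ ≤ m := hdeg

end Stmt8Aux

open Stmt8Aux in
theorem stmt8 {K : Type*} [Field K]
    [DecidableEq (Matrix.SpecialLinearGroup (Fin 2) K)]
    (V : Finset (Matrix.SpecialLinearGroup (Fin 2) K))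
    (hdiag : ∀ v ∈ V, (v : Matrix (Fin 2) (Fin 2) K) 0 1 = 0 ∧
                      (v : Matrix (Fin 2) (Fin 2) K) 1 0 = 0)
    (g : Matrix.SpecialLinearGroup (Fin 2) K)
    (hg : (g : Matrix (Fin 2) (Fin 2) K) 0 0 * (g : Matrix (Fin 2) (Fin 2) K) 0 1 *
          (g : Matrix (Fin 2) (Fin 2) K) 1 0 * (g : Matrix (Fin 2) (Fin 2) K) 1 1 ≠ 0) :
    ((V * V.image (fun v => g * v * g⁻¹) * V).card : ℝ)
      ≥ 1 / 2 * ((V.card : ℝ) / 4 - 5) * (V.card : ℝ) ^ 2 := by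
  classical
  set T := V * V.image (fun v => g * v * g⁻¹) * V with hT
  by_cases hsmall : ((V.card : ℝ) / 4 - 5) ≤ 0
  · have h1 : 1 / 2 * ((V.card : ℝ) / 4 - 5) * (V.card : ℝ) ^ 2 ≤ 0 := by
      nlinarith [sq_nonneg ((V.card : ℝ))]
    have h2 : (0 : ℝ) ≤ (T.card : ℝ) := Nat.cast_nonneg _
    linarith
  push_neg at hsmall
  set a := (g : Matrix (Fin 2) (Fin 2) K) 0 0 with ha_def
  set b := (g : Matrix (Fin 2) (Fin 2) K) 0 1 with hb_def
  set c := (g : Matrix (Fin 2) (Fin 2) K) 1 0 with hc_def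
  set d := (g : Matrix (Fin 2) (Fin 2) K) 1 1 with hd_def
  have ha : a ≠ 0 := fun h => hg (by rw [h]; ring)
  have hb : b ≠ 0 := fun h => hg (by rw [h]; ring)
  have hc : c ≠ 0 := fun h => hg (by rw [h]; ring)
  have hd : d ≠ 0 := fun h => hg (by rw [h]; ring)
  have habcd : a * b * c * d ≠ 0 := hg
  -- the "good" subset
  set S := V.filter (fun v : Matrix.SpecialLinearGroup (Fin 2) K => ¬ ((v : Matrix (Fin 2) (Fin 2) K) 0 0) ^ 4 = 1) with hS
  have hSsub : S ⊆ V := Finset.filter_subset _ _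
  have hbad : (V.filter (fun v : Matrix.SpecialLinearGroup (Fin 2) K => ((v : Matrix (Fin 2) (Fin 2) K) 0 0) ^ 4 = 1)).card ≤ 4 := by
    apply card_le_of_roots _ (fun v hv => hdiag v (Finset.mem_of_mem_filter v hv))
      ((Polynomial.X : Polynomial K) ^ 4 - Polynomial.C 1)
      (Polynomial.X_pow_sub_C_ne_zero (by norm_num) 1) 4
    · rw [Polynomial.natDegree_X_pow_sub_C]
    · intro v hv
      have h4 := (Finset.mem_filter.mp hv).2
      simp [h4]
  have hScard : V.card ≤ S.card + 4 := by
    have hun : V.card ≤ (V.filter (fun v : Matrix.SpecialLinearGroup (Fin 2) K => ((v : Matrix (Fin 2) (Fin 2) K) 0 0) ^ 4 = 1)).card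
        + S.card := by
      rw [hS]
      conv_lhs => rw [← Finset.filter_union_filter_not_eq
        (fun v : Matrix.SpecialLinearGroup (Fin 2) K => ((v : Matrix (Fin 2) (Fin 2) K) 0 0) ^ 4 = 1) V]
      exact Finset.card_union_le _ _
    omega
  -- the domain
  set D := V ×ˢ S ×ˢ V with hD
  have hmaps : ∀ p ∈ D, tripleMul g p ∈ T := by
    rintro ⟨p1, p2, p3⟩ hp
    rw [hD, Finset.mem_product] at hp
    rw [Finset.mem_product] at hp
    exact Finset.mul_mem_mul
      (Finset.mul_mem_mul hp.1 (Finset.mem_image_of_mem _ (hSsub hp.2.1))) hp.2.2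
  -- fiber bound
  have hfiber : ∀ M ∈ D.image (tripleMul g),
      (D.filter (fun p => tripleMul g p = M)).card ≤ 8 := by
    intro M hM
    set F := D.filter (fun p => tripleMul g p = M) with hF
    have hmem : ∀ p ∈ F, p.1 ∈ V ∧ p.2.1 ∈ S ∧ p.2.2 ∈ V ∧
        p.1 * (g * p.2.1 * g⁻¹) * p.2.2 = M := by
      intro p hp
      rw [hF, Finset.mem_filter, hD, Finset.mem_product] at hp
      have hp2 := hp.1.2
      rw [Finset.mem_product] at hp2
      exact ⟨hp.1.1, hp2.1, hp2.2, hp.2⟩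
    -- entry equations for members of F
    have hEq : ∀ p ∈ F,
        (M : Matrix (Fin 2) (Fin 2) K) 0 0 =
          (p.1 : Matrix (Fin 2) (Fin 2) K) 0 0 * (p.2.2 : Matrix (Fin 2) (Fin 2) K) 0 0 *
            (a * d * (p.2.1 : Matrix (Fin 2) (Fin 2) K) 0 0 - b * c * (p.2.1 : Matrix (Fin 2) (Fin 2) K) 1 1) ∧
        (M : Matrix (Fin 2) (Fin 2) K) 0 1 =
          (p.1 : Matrix (Fin 2) (Fin 2) K) 0 0 * (p.2.2 : Matrix (Fin 2) (Fin 2) K) 1 1 *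
            (a * b * ((p.2.1 : Matrix (Fin 2) (Fin 2) K) 1 1 - (p.2.1 : Matrix (Fin 2) (Fin 2) K) 0 0)) ∧
        (M : Matrix (Fin 2) (Fin 2) K) 1 0 =
          (p.1 : Matrix (Fin 2) (Fin 2) K) 1 1 * (p.2.2 : Matrix (Fin 2) (Fin 2) K) 0 0 *
            (c * d * ((p.2.1 : Matrix (Fin 2) (Fin 2) K) 0 0 - (p.2.1 : Matrix (Fin 2) (Fin 2) K) 1 1)) ∧
        (M : Matrix (Fin 2) (Fin 2) K) 1 1 =
          (p.1 : Matrix (Fin 2) (Fin 2) K) 1 1 * (p.2.2 : Matrix (Fin 2) (Fin 2) K) 1 1 *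
            (a * d * (p.2.1 : Matrix (Fin 2) (Fin 2) K) 1 1 - b * c * (p.2.1 : Matrix (Fin 2) (Fin 2) K) 0 0) := by
      intro p hp
      obtain ⟨hp1, hp2, hp3, hpM⟩ := hmem p hp
      obtain ⟨h1a, h1b⟩ := hdiag _ hp1
      obtain ⟨h2a, h2b⟩ := hdiag _ (hSsub hp2)
      obtain ⟨h3a, h3b⟩ := hdiag _ hp3
      have E := entries g p.1 p.2.1 p.2.2 h1a h1b h2a h2b h3a h3b
      rw [hpM] at E
      rw [← ha_def, ← hb_def, ← hc_def, ← hd_def] at E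
      exact ⟨E.1, E.2.1, E.2.2.1, E.2.2.2⟩
    -- the middle projection hits few elements
    have h4 : (F.image (fun p => p.2.1)).card ≤ 4 := by
      set e : K := (M : Matrix (Fin 2) (Fin 2) K) 0 1 * (M : Matrix (Fin 2) (Fin 2) K) 1 0 with he
      set P : Polynomial K := Polynomial.C (a * b * c * d) * Polynomial.X ^ 4
        + Polynomial.C (e - 2 * (a * b * c * d)) * Polynomial.X ^ 2
        + Polynomial.C (a * b * c * d) with hP
      have hPne : P ≠ 0 := by
        intro h0
        have hco : P.coeff 4 = a * b * c * d := by
          rw [hP, Polynomial.coeff_add, Polynomial.coeff_add, Polynomial.coeff_C_mul,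
            Polynomial.coeff_C_mul, Polynomial.coeff_X_pow, Polynomial.coeff_X_pow,
            Polynomial.coeff_C]
          norm_num
        rw [h0, Polynomial.coeff_zero] at hco
        exact habcd hco.symm
      have hPdeg : P.natDegree ≤ 4 := by
        rw [hP]; compute_degree
      refine card_le_of_roots _ ?_ P hPne 4 hPdeg ?_
      · intro v hv
        obtain ⟨p, hp, rfl⟩ := Finset.mem_image.mp hv
        exact hdiag _ (hSsub (hmem p hp).2.1)
      · intro v hv
        obtain ⟨p, hp, rfl⟩ := Finset.mem_image.mp hv
        obtain ⟨hp1, hp2, hp3, hpM⟩ := hmem p hp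
        obtain ⟨h1a, h1b⟩ := hdiag _ hp1
        obtain ⟨h2a, h2b⟩ := hdiag _ (hSsub hp2)
        obtain ⟨h3a, h3b⟩ := hdiag _ hp3
        have E := hEq p hp
        have htt := diag_mul_one h1a h1b
        have huu := diag_mul_one h3a h3b
        have hss := diag_mul_one h2a h2b
        set t := (p.1 : Matrix (Fin 2) (Fin 2) K) 0 0
        set t' := (p.1 : Matrix (Fin 2) (Fin 2) K) 1 1
        set s := (p.2.1 : Matrix (Fin 2) (Fin 2) K) 0 0
        set s' := (p.2.1 : Matrix (Fin 2) (Fin 2) K) 1 1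
        set u := (p.2.2 : Matrix (Fin 2) (Fin 2) K) 0 0
        set u' := (p.2.2 : Matrix (Fin 2) (Fin 2) K) 1 1
        have E01 := E.2.1
        have E10 := E.2.2.1
        rw [hP]
        simp only [Polynomial.eval_add, Polynomial.eval_mul, Polynomial.eval_pow,
          Polynomial.eval_C, Polynomial.eval_X, he]
        linear_combination ((M : Matrix (Fin 2) (Fin 2) K) 1 0 * s ^ 2) * E01
          + (t * u' * (a * b * (s' - s)) * s ^ 2) * E10
          + (u * u' * (a * b * c * d) * (s' - s) * (s - s') * s ^ 2) * htt
          + ((a * b * c * d) * (s' - s) * (s - s') * s ^ 2) * huu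
          + ((a * b * c * d) * (2 * s ^ 2 - s * s' - 1)) * hss
    -- each middle-fiber has at most 2 elements
    have h2 : ∀ q ∈ F.image (fun p => p.2.1),
        (F.filter (fun p => p.2.1 = q)).card ≤ 2 := by
      intro q hq
      set G := F.filter (fun p => p.2.1 = q) with hG
      rcases Finset.eq_empty_or_nonempty G with hGe | ⟨p0, hp0⟩
      · rw [hGe]; simp
      have hmemG : ∀ p ∈ G, p ∈ F ∧ p.2.1 = q := fun p hp => Finset.mem_filter.mp hp
      -- facts about q
      have hqS : q ∈ S := by
        obtain ⟨hp0F, hp0q⟩ := hmemG p0 hp0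
        rw [← hp0q]; exact (hmem p0 hp0F).2.1
      obtain ⟨hqa, hqb⟩ := hdiag _ (hSsub hqS)
      have hqs4 : ¬ ((q : Matrix (Fin 2) (Fin 2) K) 0 0) ^ 4 = 1 := (Finset.mem_filter.mp hqS).2
      set s := (q : Matrix (Fin 2) (Fin 2) K) 0 0 with hs_def
      set s' := (q : Matrix (Fin 2) (Fin 2) K) 1 1 with hs'_def
      have hss : s * s' = 1 := diag_mul_one hqa hqb
      have hssne : s ≠ s' := by
        intro h0
        apply hqs4
        have : s * s = 1 := by rw [h0] at hss ⊢; exact hss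
        calc s ^ 4 = (s * s) * (s * s) := by ring
          _ = 1 := by rw [this]; ring
      have hBne : a * b * (s' - s) ≠ 0 :=
        mul_ne_zero (mul_ne_zero ha hb) (sub_ne_zero_of_ne (Ne.symm hssne))
      have hCne : c * d * (s - s') ≠ 0 :=
        mul_ne_zero (mul_ne_zero hc hd) (sub_ne_zero_of_ne hssne)
      -- squares of the first coordinate agree
      have hsq : ∀ p ∈ G, ((p.1 : Matrix (Fin 2) (Fin 2) K) 0 0) ^ 2
          = ((p0.1 : Matrix (Fin 2) (Fin 2) K) 0 0) ^ 2 := by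
        intro p hp
        obtain ⟨hpF, hpq⟩ := hmemG p hp
        obtain ⟨hp0F, hp0q⟩ := hmemG p0 hp0
        obtain ⟨hp1, hp2, hp3, hpM⟩ := hmem p hpF
        obtain ⟨hq1, hq2, hq3, hqM⟩ := hmem p0 hp0F
        obtain ⟨h1a, h1b⟩ := hdiag _ hp1
        obtain ⟨h3a, h3b⟩ := hdiag _ hp3
        obtain ⟨k1a, k1b⟩ := hdiag _ hq1
        obtain ⟨k3a, k3b⟩ := hdiag _ hq3
        have Ep := hEq p hpF
        have Eq := hEq p0 hp0F
        rw [hpq] at Ep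
        rw [hp0q] at Eq
        set t := (p.1 : Matrix (Fin 2) (Fin 2) K) 0 0
        set t' := (p.1 : Matrix (Fin 2) (Fin 2) K) 1 1
        set u := (p.2.2 : Matrix (Fin 2) (Fin 2) K) 0 0
        set u' := (p.2.2 : Matrix (Fin 2) (Fin 2) K) 1 1
        set T0 := (p0.1 : Matrix (Fin 2) (Fin 2) K) 0 0
        set T' := (p0.1 : Matrix (Fin 2) (Fin 2) K) 1 1
        set U0 := (p0.2.2 : Matrix (Fin 2) (Fin 2) K) 0 0
        set U' := (p0.2.2 : Matrix (Fin 2) (Fin 2) K) 1 1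
        have htt : t * t' = 1 := diag_mul_one h1a h1b
        have huu : u * u' = 1 := diag_mul_one h3a h3b
        have hTT : T0 * T' = 1 := diag_mul_one k1a k1b
        have hUU : U0 * U' = 1 := diag_mul_one k3a k3b
        -- common equations
        have e01 : t * u' = T0 * U' := by
          have h01 : t * u' * (a * b * (s' - s)) = T0 * U' * (a * b * (s' - s)) :=
            (Ep.2.1).symm.trans (Eq.2.1)
          exact mul_right_cancel₀ hBne h01
        have e10 : t' * u = T' * U0 := by
          have h10 : t' * u * (c * d * (s - s')) = T' * U0 * (c * d * (s - s')) :=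
            (Ep.2.2.1).symm.trans (Eq.2.2.1)
          exact mul_right_cancel₀ hCne h10
        by_cases hA : a * d * s - b * c * s' = 0
        · -- use the (1,1) entry
          have hA' : a * d * s' - b * c * s ≠ 0 := by
            intro hA'
            have key : a * d * (s ^ 4 - 1) = 0 := by
              linear_combination (s ^ 3) * hA - s * hA' + (b * c * s ^ 2 + a * d) * hss
            have had : a * d ≠ 0 := mul_ne_zero ha hd
            rcases mul_eq_zero.mp key with h0 | h0
            · exact had h0
            · exact hqs4 (by linear_combination h0)
          have e11 : t' * u' = T' * U' := by
            have h11 : t' * u' * (a * d * s' - b * c * s) = T' * U' * (a * d * s' - b * c * s) :=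
              (Ep.2.2.2).symm.trans (Eq.2.2.2)
            exact mul_right_cancel₀ hA' h11
          have ht'2 : t' ^ 2 = T' ^ 2 := by
            linear_combination (t' * u') * e10 + (T' * U0) * e11 - t' ^ 2 * huu + T' ^ 2 * hUU
          have hT'ne : T' ^ 2 ≠ 0 := pow_ne_zero 2 (right_ne_zero_of_mul_eq_one hTT)
          have h1 : t ^ 2 * T' ^ 2 = 1 := by
            rw [← ht'2]; linear_combination (t * t' + 1) * htt
          have h2' : T0 ^ 2 * T' ^ 2 = 1 := by
            linear_combination (T0 * T' + 1) * hTT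
          exact mul_right_cancel₀ hT'ne (h1.trans h2'.symm)
        · -- use the (0,0) entry
          have e00 : t * u = T0 * U0 := by
            have h00 : t * u * (a * d * s - b * c * s') = T0 * U0 * (a * d * s - b * c * s') :=
              (Ep.1).symm.trans (Eq.1)
            exact mul_right_cancel₀ hA h00
          linear_combination (t * u') * e00 + (T0 * U0) * e01 - t ^ 2 * huu + T0 ^ 2 * hUU
      -- conclude card G ≤ 2
      have hinj : Set.InjOn (fun p : Matrix.SpecialLinearGroup (Fin 2) K × Matrix.SpecialLinearGroup (Fin 2) K × Matrix.SpecialLinearGroup (Fin 2) K => (p.1 : Matrix (Fin 2) (Fin 2) K) 0 0) ↑G := by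
        rintro p hp r hr hpr
        simp only [Finset.mem_coe] at hp hr
        obtain ⟨hpF, hpq⟩ := hmemG p hp
        obtain ⟨hrF, hrq⟩ := hmemG r hr
        obtain ⟨hp1, hp2, hp3, hpM⟩ := hmem p hpF
        obtain ⟨hr1, hr2, hr3, hrM⟩ := hmem r hrF
        obtain ⟨h1a, h1b⟩ := hdiag _ hp1
        obtain ⟨k1a, k1b⟩ := hdiag _ hr1
        have e1 : p.1 = r.1 := diag_ext h1a h1b k1a k1b hpr
        have e2 : p.2.1 = r.2.1 := hpq.trans hrq.symm
        have e3 : p.2.2 = r.2.2 := by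
          apply mul_left_cancel (a := p.1 * (g * p.2.1 * g⁻¹))
          rw [hpM]
          rw [e1, e2]
          exact hrM.symm
        exact Prod.ext e1 (Prod.ext e2 e3)
      have hGle : G.card ≤ ({((p0.1 : Matrix (Fin 2) (Fin 2) K) 0 0),
          -((p0.1 : Matrix (Fin 2) (Fin 2) K) 0 0)} : Finset K).card := by
        apply Finset.card_le_card_of_injOn (fun p : Matrix.SpecialLinearGroup (Fin 2) K × Matrix.SpecialLinearGroup (Fin 2) K × Matrix.SpecialLinearGroup (Fin 2) K => (p.1 : Matrix (Fin 2) (Fin 2) K) 0 0) _ hinj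
        intro p hp
        have := hsq p hp
        rcases sq_eq_sq_iff_eq_or_eq_neg.mp this with h0 | h0 <;>
          simp [h0]
      calc G.card ≤ _ := hGle
        _ ≤ 2 := by
          apply le_trans (Finset.card_insert_le _ _)
          simp
    calc F.card ≤ 2 * (F.image (fun p => p.2.1)).card :=
          Finset.card_le_mul_card_image F 2 h2
      _ ≤ 2 * 4 := by omega
      _ = 8 := rfl
  -- put everything together
  have hcount : D.card ≤ 8 * T.card := by
    have h1 : D.card ≤ 8 * (D.image (tripleMul g)).card :=
      Finset.card_le_mul_card_image D 8 hfiber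
    have h2 : (D.image (tripleMul g)).card ≤ T.card :=
      Finset.card_le_card (Finset.image_subset_iff.mpr hmaps)
    omega
  have hDcard : D.card = V.card * (S.card * V.card) := by
    rw [hD, Finset.card_product, Finset.card_product]
  have hc1 : (V.card : ℝ) * ((S.card : ℝ) * (V.card : ℝ)) ≤ 8 * (T.card : ℝ) := by
    rw [hDcard] at hcount
    exact_mod_cast hcount
  have hc2 : (V.card : ℝ) ≤ (S.card : ℝ) + 4 := by exact_mod_cast hScard
  have hnn : (0 : ℝ) ≤ (V.card : ℝ) := Nat.cast_nonneg _
  have key : (V.card : ℝ) * (V.card : ℝ) * (V.card : ℝ)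
      ≤ (V.card : ℝ) * (V.card : ℝ) * ((S.card : ℝ) + 4) :=
    mul_le_mul_of_nonneg_left hc2 (mul_nonneg hnn hnn)
  rw [ge_iff_le]
  nlinarith [hc1, key, sq_nonneg ((V.card : ℝ))]
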